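/- Holroyd–Propp bound: For any initial rotor configuration and any simple rotor mechanism on ℤ^d, if h : ℤ^d → ℝ is discrete harmonic on the rotor aggregation cluster R_n (of n particles started at the origin), then |Σ_{x ∈ R_n} h(x) − n·h(0)| ≤ Σ_{x ∈ R_n} Σ_{y ∼ x} |h(x) − h(y)|. -/

import Mathlib

/-- The lattice `ℤᵈ`. -/
abbrev Vd (d : ℕ) := Fin d → ℤ

/-- The neighbor of `x` in direction `j = (i, b)`: `x + eᵢ` if `b`, else `x − eᵢ`. -/
def nbr {d : ℕ} (x : Vd d) (j : Fin d × Bool) : Vd d :=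
  if j.2 then x + Pi.single j.1 1 else x - Pi.single j.1 1

/-- The graph Laplacian on `ℤᵈ`: `Δf(x) = Σ_{y ∼ x} (f(y) − f(x))`. -/
def lapd {d : ℕ} (f : Vd d → ℝ) (x : Vd d) : ℝ :=
  ∑ j : Fin d × Bool, (f (nbr x j) - f x)

/-- A configuration during rotor aggregation: the rotor directions (as indices into each
vertex's periodic mechanism), the set of occupied sites, and the current walker (if any). -/
structure RConf (d : ℕ) where
  rotors : Vd d → ZMod (2 * d)
  occ : Finset (Vd d)
  walker : Option (Vd d)

/-- One step of rotor aggregation with mechanism `mech`: launch a new particle at the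
origin, settle the walker at an unoccupied site, or advance the rotor at the walker's
(occupied) site and move the walker to the neighbor it now points to. -/
inductive RStep {d : ℕ} (mech : Vd d → ZMod (2 * d) → Fin d × Bool) :
    RConf d → RConf d → Prop
  | launch (c : RConf d) (h : c.walker = none) :
      RStep mech c ⟨c.rotors, c.occ, some 0⟩
  | settle (c : RConf d) (p : Vd d) (h : c.walker = some p) (hp : p ∉ c.occ) :
      RStep mech c ⟨c.rotors, insert p c.occ, none⟩
  | move (c : RConf d) (p : Vd d) (h : c.walker = some p) (hp : p ∈ c.occ) :
      RStep mech c ⟨Function.update c.rotors p (c.rotors p + 1), c.occ,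
        some (nbr p (mech p (c.rotors p + 1)))⟩

/-- A complete execution of rotor aggregation of `n` particles started at the origin of
`ℤᵈ`, with rotor mechanism `mech` and initial rotor configuration `r₀`. -/
structure RotorExec (d n : ℕ) (mech : Vd d → ZMod (2 * d) → Fin d × Bool)
    (r₀ : Vd d → ZMod (2 * d)) where
  T : ℕ
  conf : ℕ → RConf d
  init : conf 0 = ⟨r₀, ∅, none⟩
  step : ∀ i < T, RStep mech (conf i) (conf (i + 1))
  walker_final : (conf T).walker = none
  card_final : (conf T).occ.card = n

/-- A rotor mechanism is simple if each of the `2d` neighbors occurs exactly once per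
period. -/
def SimpleMech {d : ℕ} (mech : Vd d → ZMod (2 * d) → Fin d × Bool) : Prop :=
  ∀ v, Function.Bijective (mech v)

variable {d n : ℕ} {mech : Vd d → ZMod (2 * d) → Fin d × Bool} {r₀ : Vd d → ZMod (2 * d)}

/-- The final cluster `Rₙ` of occupied sites. -/
def RotorExec.cluster (E : RotorExec d n mech r₀) : Finset (Vd d) := (E.conf E.T).occ

/-- The odometer: total number of exits from `x` by all particles. -/
def RotorExec.u (E : RotorExec d n mech r₀) (x : Vd d) : ℕ :=
  ((Finset.range E.T).filter
    (fun i => (E.conf i).walker = some x ∧ x ∈ (E.conf i).occ)).card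

/-- `N(x,y)`: total number of particle moves from `x` to `y`. -/
def RotorExec.N (E : RotorExec d n mech r₀) (x y : Vd d) : ℕ :=
  ((Finset.range E.T).filter (fun i => (E.conf i).walker = some x ∧
    x ∈ (E.conf i).occ ∧ (E.conf (i + 1)).walker = some y)).card

/-- `θ(x,y) = N(x,y) − N(y,x)`: net number of crossings of the directed edge `(x,y)`. -/
def RotorExec.theta (E : RotorExec d n mech r₀) (x y : Vd d) : ℤ :=
  (E.N x y : ℤ) - (E.N y x : ℤ)

section HPAux

variable {d n : ℕ} {mech : Vd d → ZMod (2 * d) → Fin d × Bool} {r₀ : Vd d → ZMod (2 * d)}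

lemma RStep.inv {c c' : RConf d} (hs : RStep mech c c') :
    (c.walker = none ∧ c' = ⟨c.rotors, c.occ, some 0⟩) ∨
    (∃ p, c.walker = some p ∧ p ∉ c.occ ∧ c' = ⟨c.rotors, insert p c.occ, none⟩) ∨
    (∃ p, c.walker = some p ∧ p ∈ c.occ ∧
      c' = ⟨Function.update c.rotors p (c.rotors p + 1), c.occ,
        some (nbr p (mech p (c.rotors p + 1)))⟩) := by
  cases hs with
  | launch h => exact Or.inl ⟨h, rfl⟩
  | settle p h hp => exact Or.inr (Or.inl ⟨p, h, hp, rfl⟩)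
  | move p h hp => exact Or.inr (Or.inr ⟨p, h, hp, rfl⟩)

/-- A move configuration: walker present at an occupied site. -/
def RConf.isMove (c : RConf d) : Prop := ∃ p ∈ c.occ, c.walker = some p

instance (c : RConf d) : Decidable c.isMove := by unfold RConf.isMove; infer_instance

/-- A settle configuration: walker present at an unoccupied site. -/
def RConf.isSettle (c : RConf d) : Prop := c.walker ≠ none ∧ ¬ c.isMove

instance (c : RConf d) : Decidable c.isSettle := by unfold RConf.isSettle; infer_instance

/-- The walker's position (junk if absent). -/
def RConf.pa (c : RConf d) : Vd d := c.walker.getD 0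

namespace RotorExec

variable (E : RotorExec d n mech r₀)

/-- Number of moves out of `p` before time `i`. -/
def mc (p : Vd d) (i : ℕ) : ℕ :=
  ((Finset.range i).filter
    (fun t => (E.conf t).walker = some p ∧ p ∈ (E.conf t).occ)).card

lemma mc_zero (p : Vd d) : E.mc p 0 = 0 := by simp [mc]

lemma u_eq_mc (p : Vd d) : E.u p = E.mc p E.T := rfl

lemma mc_succ (p : Vd d) (i : ℕ) :
    E.mc p (i + 1) = E.mc p i +
      (if (E.conf i).walker = some p ∧ p ∈ (E.conf i).occ then 1 else 0) := by
  unfold mc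
  rw [Finset.range_add_one, Finset.filter_insert]
  split_ifs with hc
  · rw [Finset.card_insert_of_notMem (by simp)]
  · rw [Nat.add_zero]

lemma occ_step {i : ℕ} (hi : i < E.T) : (E.conf i).occ ⊆ (E.conf (i + 1)).occ := by
  rcases (E.step i hi).inv with ⟨_, hc⟩ | ⟨p, _, _, hc⟩ | ⟨p, _, _, hc⟩
  · rw [hc]
  · rw [hc]; exact Finset.subset_insert _ _
  · rw [hc]

lemma occ_mono {i j : ℕ} (hij : i ≤ j) (hj : j ≤ E.T) :
    (E.conf i).occ ⊆ (E.conf j).occ := by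
  induction hij with
  | refl => exact subset_rfl
  | @step m h2 ih =>
      exact (ih (by omega)).trans (E.occ_step (by omega))

lemma occ_subset_cluster {i : ℕ} (hi : i ≤ E.T) : (E.conf i).occ ⊆ E.cluster :=
  E.occ_mono hi le_rfl

lemma rotors_track (p : Vd d) : ∀ i, i ≤ E.T →
    (E.conf i).rotors p = r₀ p + (E.mc p i : ZMod (2 * d)) := by
  intro i
  induction i with
  | zero => intro _; rw [E.init, mc_zero]; simp
  | succ i ih =>
    intro hi
    have hrec := ih (by omega)
    rcases (E.step i (by omega)).inv with ⟨hw, hc⟩ | ⟨q, hw, hq, hc⟩ | ⟨q, hw, hq, hc⟩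
    · have hm : E.mc p (i + 1) = E.mc p i := by
        rw [E.mc_succ, if_neg, Nat.add_zero]
        rintro ⟨h1, -⟩; rw [hw] at h1; exact Option.some_ne_none _ h1.symm
      rw [hc, hm]; exact hrec
    · have hm : E.mc p (i + 1) = E.mc p i := by
        rw [E.mc_succ, if_neg, Nat.add_zero]
        rintro ⟨h1, h2⟩; rw [hw] at h1
        injection h1 with h1; subst h1; exact hq h2
      rw [hc, hm]; exact hrec
    · by_cases hpq : p = q
      · subst hpq
        have hm : E.mc p (i + 1) = E.mc p i + 1 := by
          rw [E.mc_succ, if_pos ⟨hw, hq⟩]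
        rw [hc, hm]
        show Function.update (E.conf i).rotors p _ p = _
        rw [Function.update_self, hrec]
        push_cast; ring
      · have hm : E.mc p (i + 1) = E.mc p i := by
          rw [E.mc_succ, if_neg, Nat.add_zero]
          rintro ⟨h1, -⟩; rw [hw] at h1
          injection h1 with h1; exact hpq h1.symm
        rw [hc, hm]
        show Function.update (E.conf i).rotors q _ p = _
        rw [Function.update_of_ne hpq]
        exact hrec

lemma mc_filter (p : Vd d) (Q : ℕ → Prop) [DecidablePred Q] :
    ∀ i, i ≤ E.T →
    ((Finset.range i).filter (fun t =>
        ((E.conf t).walker = some p ∧ p ∈ (E.conf t).occ) ∧ Q (E.mc p t))).card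
      = ((Finset.range (E.mc p i)).filter Q).card := by
  intro i
  induction i with
  | zero => intro _; rw [mc_zero]; simp
  | succ i ih =>
    intro hi
    have hi' : i ≤ E.T := by omega
    rw [Finset.range_add_one, Finset.filter_insert]
    by_cases hc : (E.conf i).walker = some p ∧ p ∈ (E.conf i).occ
    · have hmc : E.mc p (i + 1) = E.mc p i + 1 := by rw [E.mc_succ, if_pos hc]
      rw [hmc, Finset.range_add_one, Finset.filter_insert]
      by_cases hq : Q (E.mc p i)
      · rw [if_pos ⟨hc, hq⟩, if_pos hq,
          Finset.card_insert_of_notMem (by simp),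
          Finset.card_insert_of_notMem (by simp), ih hi']
      · rw [if_neg (by tauto), if_neg hq, ih hi']
    · have hmc : E.mc p (i + 1) = E.mc p i := by
        rw [E.mc_succ, if_neg hc, Nat.add_zero]
      rw [if_neg (by tauto), hmc, ih hi']

lemma card_occ : ∀ i, i ≤ E.T → (E.conf i).occ.card
    = ((Finset.range i).filter (fun t => (E.conf t).isSettle)).card := by
  intro i
  induction i with
  | zero => intro _; rw [E.init]; simp
  | succ i ih =>
    intro hi
    have hi' : i ≤ E.T := by omega
    rw [Finset.range_add_one, Finset.filter_insert]
    rcases (E.step i (by omega)).inv with ⟨hw, hc⟩ | ⟨q, hw, hq, hc⟩ | ⟨q, hw, hq, hc⟩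
    · rw [if_neg, hc, ih hi']
      rintro ⟨h1, -⟩; exact h1 hw
    · rw [if_pos, hc]
      · show (insert q (E.conf i).occ).card = _
        rw [Finset.card_insert_of_notMem hq,
          Finset.card_insert_of_notMem (by simp), ih hi']
      · refine ⟨by rw [hw]; exact Option.some_ne_none _, ?_⟩
        rintro ⟨r, hr, hwr⟩
        rw [hw] at hwr; injection hwr with hwr; subst hwr; exact hq hr
    · rw [if_neg, hc, ih hi']
      rintro ⟨-, h2⟩; exact h2 ⟨q, hq, hw⟩

end RotorExec

end HPAux
lemma hp_count_mod {m : ℕ} (hm : 0 < m) {r : ℕ} (hr : r < m) (u : ℕ) :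
    ((Finset.range u).filter (fun k => k % m = r)).card
      = u / m + if r < u % m then 1 else 0 := by
  induction u with
  | zero => simp
  | succ u ih =>
    have hsd : (u + 1) / m = u / m + if m ∣ u + 1 then 1 else 0 := Nat.succ_div
    rw [Finset.range_add_one, Finset.filter_insert]
    by_cases hdvd : m ∣ u + 1
    · obtain ⟨c, hc⟩ := hdvd
      have hc1 : 1 ≤ c := by
        rcases Nat.eq_zero_or_pos c with h | h
        · rw [h, Nat.mul_zero] at hc; omega
        · exact h
      have h2 : m * c = m * (c - 1) + m := by
        conv_lhs => rw [← Nat.succ_pred_eq_of_pos hc1, Nat.mul_succ, Nat.pred_eq_sub_one]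
      have hu : u = (m - 1) + m * (c - 1) := by
        set A := m * (c - 1); set B := m * c; omega
      have hmod : u % m = m - 1 := by
        rw [hu, Nat.add_mul_mod_self_left, Nat.mod_eq_of_lt (by omega)]
      have hdiv : u / m = c - 1 := by
        rw [hu, Nat.add_mul_div_left _ _ hm, Nat.div_eq_of_lt (by omega), Nat.zero_add]
      have hmod1 : (u + 1) % m = 0 := by rw [hc, Nat.mul_mod_right]
      have hdiv1 : (u + 1) / m = u / m + 1 := by rw [hsd, if_pos ⟨c, hc⟩]
      by_cases hc2 : u % m = r
      · rw [if_pos hc2, Finset.card_insert_of_notMem (by simp), ih, hdiv1, hmod1, hmod]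
        have h3 : ¬ r < m - 1 := by omega
        simp [h3]
      · rw [if_neg hc2, ih, hdiv1, hmod1, hmod]
        have h3 : r < m - 1 := by omega
        simp [h3]
    · have hdiv1 : (u + 1) / m = u / m := by rw [hsd, if_neg hdvd, Nat.add_zero]
      have hmod1 : (u + 1) % m = u % m + 1 := by
        have e0 := Nat.div_add_mod u m
        have e1 := Nat.div_add_mod (u + 1) m
        have l0 : u % m < m := Nat.mod_lt _ hm
        have l1 : (u + 1) % m < m := Nat.mod_lt _ hm
        have hne : (u + 1) % m ≠ 0 := by
          intro h0
          exact hdvd (Nat.dvd_iff_mod_eq_zero.mpr h0)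
        rw [hdiv1] at e1
        set X := m * (u / m)
        omega
      by_cases hc2 : u % m = r
      · rw [if_pos hc2, Finset.card_insert_of_notMem (by simp), ih, hdiv1, hmod1]
        have h1 : ¬ r < u % m := by omega
        have h2 : r < u % m + 1 := by omega
        simp [h1, h2]
      · rw [if_neg hc2, ih, hdiv1, hmod1]
        have h3 : (r < u % m) ↔ (r < u % m + 1) := by omega
        simp only [h3]
section HPTele

variable {d n : ℕ} {mech : Vd d → ZMod (2 * d) → Fin d × Bool} {r₀ : Vd d → ZMod (2 * d)}

/-- Total weight of a configuration. -/
def hpWsum (h : Vd d → ℝ) (c : RConf d) : ℝ :=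
  (∑ x ∈ c.occ, h x) + c.walker.elim 0 h

/-- Weight change due to a move step. -/
def hpMdelta (mech : Vd d → ZMod (2 * d) → Fin d × Bool) (h : Vd d → ℝ) (c : RConf d) : ℝ :=
  c.walker.elim 0 (fun p => h (nbr p (mech p (c.rotors p + 1))) - h p)

namespace RotorExec

variable (E : RotorExec d n mech r₀) (h : Vd d → ℝ)

lemma wsum_step {i : ℕ} (hi : i < E.T) :
    hpWsum h (E.conf (i + 1)) - hpWsum h (E.conf i) =
      (if (E.conf i).walker = none then h 0 else 0) +
      (if (E.conf i).isMove then hpMdelta mech h (E.conf i) else 0) := by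
  rcases (E.step i hi).inv with ⟨hw, hc⟩ | ⟨p, hw, hp, hc⟩ | ⟨p, hw, hp, hc⟩
  · have hnm : ¬ (E.conf i).isMove := by
      rintro ⟨q, -, hq⟩; rw [hw] at hq; exact Option.some_ne_none _ hq.symm
    rw [hc, if_pos hw, if_neg hnm]
    simp [hpWsum, hw]
  · have hnn : ¬ (E.conf i).walker = none := by rw [hw]; exact Option.some_ne_none _
    have hnm : ¬ (E.conf i).isMove := by
      rintro ⟨q, hq, hwq⟩; rw [hw] at hwq
      injection hwq with hwq; subst hwq; exact hp hq
    rw [hc, if_neg hnn, if_neg hnm]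
    simp only [hpWsum, hw]
    show (∑ x ∈ insert p (E.conf i).occ, h x) + 0 - _ = _
    rw [Finset.sum_insert hp, Option.elim_some]
    ring
  · have hnn : ¬ (E.conf i).walker = none := by rw [hw]; exact Option.some_ne_none _
    have hm : (E.conf i).isMove := ⟨p, hp, hw⟩
    rw [hc, if_neg hnn, if_pos hm]
    simp only [hpWsum, hpMdelta, hw]
    rw [Option.elim_some, Option.elim_some, Option.elim_some]
    ring

lemma settle_count : ((Finset.range E.T).filter (fun t => (E.conf t).isSettle)).card = n := by
  rw [← E.card_occ E.T le_rfl]; exact E.card_final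

lemma launch_count :
    ∑ i ∈ Finset.range E.T, (if (E.conf i).walker = none then (1 : ℝ) else 0) = n := by
  set f : ℕ → ℝ := fun i => if (E.conf i).walker = none then (0 : ℝ) else 1 with hf
  have tele : ∑ i ∈ Finset.range E.T, (f (i + 1) - f i) = f E.T - f 0 :=
    Finset.sum_range_sub f E.T
  have h0 : f 0 = 0 := by simp [hf, E.init]
  have hT : f E.T = 0 := by simp [hf, E.walker_final]
  have hstep : ∀ i ∈ Finset.range E.T, f (i + 1) - f i =
      (if (E.conf i).walker = none then (1 : ℝ) else 0)
        - (if (E.conf i).isSettle then (1 : ℝ) else 0) := by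
    intro i hi
    rw [Finset.mem_range] at hi
    rcases (E.step i hi).inv with ⟨hw, hc⟩ | ⟨p, hw, hp, hc⟩ | ⟨p, hw, hp, hc⟩
    · have hnm : ¬ (E.conf i).isSettle := by rintro ⟨h1, -⟩; exact h1 hw
      rw [if_pos hw, if_neg hnm]
      simp [hf, hc, hw]
    · have hnn : ¬ (E.conf i).walker = none := by rw [hw]; exact Option.some_ne_none _
      have hs : (E.conf i).isSettle := by
        refine ⟨hnn, ?_⟩
        rintro ⟨q, hq, hwq⟩; rw [hw] at hwq
        injection hwq with hwq; subst hwq; exact hp hq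
      rw [if_neg hnn, if_pos hs]
      simp [hf, hc, hw]
    · have hnn : ¬ (E.conf i).walker = none := by rw [hw]; exact Option.some_ne_none _
      have hnm : ¬ (E.conf i).isSettle := by
        rintro ⟨-, h2⟩; exact h2 ⟨p, hp, hw⟩
      rw [if_neg hnn, if_neg hnm]
      simp [hf, hc, hw]
  rw [Finset.sum_congr rfl hstep, Finset.sum_sub_distrib, h0, hT] at tele
  have hb : ∑ i ∈ Finset.range E.T, (if (E.conf i).isSettle then (1 : ℝ) else 0)
      = ((Finset.range E.T).filter (fun t => (E.conf t).isSettle)).card := by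
    rw [Finset.sum_boole]
  rw [hb, E.settle_count] at tele
  linarith

end RotorExec

end HPTele
lemma hp_natCast_eq_iff {m : ℕ} [NeZero m] (k : ℕ) (c : ZMod m) :
    (k : ZMod m) = c ↔ k % m = c.val := by
  constructor
  · rintro rfl; exact (ZMod.val_natCast m k).symm
  · intro hk
    calc (k : ZMod m) = ((k % m : ℕ) : ZMod m) := (ZMod.natCast_mod k m).symm
      _ = ((c.val : ℕ) : ZMod m) := by rw [hk]
      _ = c := ZMod.natCast_rightInverse c

theorem holroyd_propp_bound (hd : 0 < d) (hmech : SimpleMech mech)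
    (E : RotorExec d n mech r₀) (h : Vd d → ℝ)
    (hharm : ∀ x ∈ E.cluster, lapd h x = 0) :
    |∑ x ∈ E.cluster, h x - n * h 0| ≤
      ∑ x ∈ E.cluster, ∑ j : Fin d × Bool, |h x - h (nbr x j)| := by
  classical
  haveI : NeZero (2 * d) := ⟨by omega⟩
  have hm2 : 0 < 2 * d := by omega
  -- Step 1 : telescoping the weight function
  have tele : ∑ i ∈ Finset.range E.T,
      (hpWsum h (E.conf (i + 1)) - hpWsum h (E.conf i))
      = hpWsum h (E.conf E.T) - hpWsum h (E.conf 0) := Finset.sum_range_sub (fun i => hpWsum h (E.conf i)) E.T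
  have hWT : hpWsum h (E.conf E.T) = ∑ x ∈ E.cluster, h x := by
    simp [hpWsum, E.walker_final, RotorExec.cluster]
  have hW0 : hpWsum h (E.conf 0) = 0 := by simp [hpWsum, E.init]
  have hsplit : ∀ i ∈ Finset.range E.T,
      hpWsum h (E.conf (i + 1)) - hpWsum h (E.conf i) =
      (if (E.conf i).walker = none then h 0 else 0) +
      (if (E.conf i).isMove then hpMdelta mech h (E.conf i) else 0) :=
    fun i hi => E.wsum_step h (Finset.mem_range.mp hi)
  rw [Finset.sum_congr rfl hsplit, Finset.sum_add_distrib, hWT, hW0, sub_zero] at tele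
  have hlaunch : ∑ i ∈ Finset.range E.T,
      (if (E.conf i).walker = none then h 0 else 0) = n * h 0 := by
    have hh : ∀ i, (if (E.conf i).walker = none then h 0 else 0)
        = (if (E.conf i).walker = none then (1 : ℝ) else 0) * h 0 := by
      intro i; split_ifs <;> ring
    rw [Finset.sum_congr rfl (fun i _ => hh i), ← Finset.sum_mul, E.launch_count]
  rw [hlaunch, ← Finset.sum_filter] at tele
  set MT := (Finset.range E.T).filter (fun i => (E.conf i).isMove) with hMT
  have key : ∑ x ∈ E.cluster, h x - n * h 0
      = ∑ i ∈ MT, hpMdelta mech h (E.conf i) := by linarith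
  -- Step 2 : fiberwise over the site of each move
  have hmaps : ∀ i ∈ MT, (E.conf i).pa ∈ E.cluster := by
    intro i hi
    rw [hMT, Finset.mem_filter, Finset.mem_range] at hi
    obtain ⟨hiT, p, hpo, hw⟩ := hi
    have hpp : (E.conf i).pa = p := by rw [RConf.pa, hw]; rfl
    rw [hpp]
    exact E.occ_subset_cluster (le_of_lt hiT) hpo
  have fib : ∑ i ∈ MT, hpMdelta mech h (E.conf i)
      = ∑ p ∈ E.cluster, ∑ i ∈ MT.filter (fun i => (E.conf i).pa = p),
          hpMdelta mech h (E.conf i) :=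
    (Finset.sum_fiberwise_of_maps_to hmaps _).symm
  -- Step 3 : per-site bound
  have bound : ∀ p ∈ E.cluster,
      |∑ i ∈ MT.filter (fun i => (E.conf i).pa = p), hpMdelta mech h (E.conf i)|
        ≤ ∑ j : Fin d × Bool, |h p - h (nbr p j)| := by
    intro p hp
    have hfil : MT.filter (fun i => (E.conf i).pa = p)
        = (Finset.range E.T).filter
            (fun i => (E.conf i).walker = some p ∧ p ∈ (E.conf i).occ) := by
      rw [hMT, Finset.filter_filter]
      apply Finset.filter_congr
      intro i _
      constructor
      · rintro ⟨⟨q, hq, hw⟩, hpa⟩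
        have hqq : (E.conf i).pa = q := by rw [RConf.pa, hw]; rfl
        rw [hqq] at hpa; subst hpa; exact ⟨hw, hq⟩
      · rintro ⟨hw, hq⟩
        exact ⟨⟨p, hq, hw⟩, by rw [RConf.pa, hw]; rfl⟩
    set dirf : ℕ → Fin d × Bool :=
      fun k => mech p (r₀ p + (k : ZMod (2 * d)) + 1) with hdirf
    have hterm : ∀ i ∈ MT.filter (fun i => (E.conf i).pa = p),
        hpMdelta mech h (E.conf i) = h (nbr p (dirf (E.mc p i))) - h p := by
      intro i hi
      rw [hfil, Finset.mem_filter, Finset.mem_range] at hi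
      obtain ⟨hiT, hw, hpo⟩ := hi
      rw [hpMdelta, hw, Option.elim_some, E.rotors_track p i (le_of_lt hiT)]
    -- fiberwise over directions
    have hsum1 : ∑ i ∈ MT.filter (fun i => (E.conf i).pa = p),
        hpMdelta mech h (E.conf i)
        = ∑ j : Fin d × Bool,
            ∑ i ∈ (MT.filter (fun i => (E.conf i).pa = p)).filter
                (fun i => dirf (E.mc p i) = j),
              (h (nbr p (dirf (E.mc p i))) - h p) := by
      rw [Finset.sum_congr rfl hterm]
      exact (Finset.sum_fiberwise_of_maps_to (fun i _ => Finset.mem_univ _) _).symm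
    set e := Equiv.ofBijective (mech p) (hmech p) with he
    have hiff : ∀ j : Fin d × Bool, ∀ k : ℕ,
        dirf k = j ↔ k % (2 * d) = (e.symm j - r₀ p - 1).val := by
      intro j k
      rw [hdirf]
      have h1 : mech p (r₀ p + (k : ZMod (2 * d)) + 1) = j
          ↔ r₀ p + (k : ZMod (2 * d)) + 1 = e.symm j := by
        constructor
        · intro hk; apply e.injective; rw [Equiv.apply_symm_apply]; exact hk
        · intro hk; have := congrArg e hk; rwa [Equiv.apply_symm_apply] at this
      have h2 : r₀ p + (k : ZMod (2 * d)) + 1 = e.symm j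
          ↔ (k : ZMod (2 * d)) = e.symm j - r₀ p - 1 := by
        constructor
        · intro hk; rw [← hk]; ring
        · intro hk; rw [hk]; ring
      rw [h1, h2, hp_natCast_eq_iff]
    have hinner : ∀ j : Fin d × Bool,
        ∑ i ∈ (MT.filter (fun i => (E.conf i).pa = p)).filter
            (fun i => dirf (E.mc p i) = j),
          (h (nbr p (dirf (E.mc p i))) - h p)
        = ((E.u p / (2 * d) +
            if (e.symm j - r₀ p - 1).val < E.u p % (2 * d) then 1 else 0 : ℕ) : ℝ)
            * (h (nbr p j) - h p) := by
      intro j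
      rw [Finset.sum_congr rfl (fun i hi => by
        rw [(Finset.mem_filter.mp hi).2]), Finset.sum_const, nsmul_eq_mul]
      congr 1
      norm_cast
      rw [hfil, Finset.filter_filter,
        E.mc_filter p (fun k => dirf k = j) E.T le_rfl, ← E.u_eq_mc p,
        Finset.filter_congr (fun k _ => hiff j k)]
      exact hp_count_mod hm2 (ZMod.val_lt _) (E.u p)
    have hlap : ∑ j : Fin d × Bool, (h (nbr p j) - h p) = 0 := hharm p hp
    have hfinal : ∑ j : Fin d × Bool,
        (((E.u p / (2 * d) +
          if (e.symm j - r₀ p - 1).val < E.u p % (2 * d) then 1 else 0 : ℕ)) : ℝ)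
          * (h (nbr p j) - h p)
        = ∑ j : Fin d × Bool,
            (if (e.symm j - r₀ p - 1).val < E.u p % (2 * d) then (1 : ℝ) else 0)
              * (h (nbr p j) - h p) := by
      have hh : ∀ j : Fin d × Bool,
          (((E.u p / (2 * d) +
            if (e.symm j - r₀ p - 1).val < E.u p % (2 * d) then 1 else 0 : ℕ)) : ℝ)
            * (h (nbr p j) - h p)
          = ((E.u p / (2 * d) : ℕ) : ℝ) * (h (nbr p j) - h p) +
            (if (e.symm j - r₀ p - 1).val < E.u p % (2 * d) then (1 : ℝ) else 0)
              * (h (nbr p j) - h p) := by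
        intro j; split_ifs <;> push_cast <;> ring
      rw [Finset.sum_congr rfl (fun j _ => hh j), Finset.sum_add_distrib,
        ← Finset.mul_sum, hlap, mul_zero, zero_add]
    calc |∑ i ∈ MT.filter (fun i => (E.conf i).pa = p), hpMdelta mech h (E.conf i)|
        = |∑ j : Fin d × Bool,
            (if (e.symm j - r₀ p - 1).val < E.u p % (2 * d) then (1 : ℝ) else 0)
              * (h (nbr p j) - h p)| := by
          rw [hsum1, Finset.sum_congr rfl (fun j _ => hinner j), hfinal]
      _ ≤ ∑ j : Fin d × Bool,
            |(if (e.symm j - r₀ p - 1).val < E.u p % (2 * d) then (1 : ℝ) else 0)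
              * (h (nbr p j) - h p)| := Finset.abs_sum_le_sum_abs _ _
      _ ≤ ∑ j : Fin d × Bool, |h p - h (nbr p j)| := by
          apply Finset.sum_le_sum
          intro j _
          rw [abs_mul, abs_sub_comm (h p)]
          split_ifs
          · rw [abs_one, one_mul]
          · rw [abs_zero, zero_mul]
            exact abs_nonneg _
  -- Step 4 : assemble
  calc |∑ x ∈ E.cluster, h x - n * h 0|
      = |∑ p ∈ E.cluster, ∑ i ∈ MT.filter (fun i => (E.conf i).pa = p),
          hpMdelta mech h (E.conf i)| := by rw [key, fib]
    _ ≤ ∑ p ∈ E.cluster, |∑ i ∈ MT.filter (fun i => (E.conf i).pa = p),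
          hpMdelta mech h (E.conf i)| := Finset.abs_sum_le_sum_abs _ _
    _ ≤ ∑ x ∈ E.cluster, ∑ j : Fin d × Bool, |h x - h (nbr x j)| :=
        Finset.sum_le_sum bound
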